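/- Let H be a separable Hilbert space, A a normal operator with scalar-valued spectral measure λ_A, and Γ^{A,B} the double operator integral *-representation of L^∞(λ_A×λ_B) on S²(H). If a ∈ L^∞(λ_A×λ_B; H₀) for a separable Hilbert space H₀ with orthonormal basis (ε_k), and a_k = ⟨a, ε_k⟩ ∈ L^∞(λ_A×λ_B), then for every X ∈ S²(H): Σ_k ‖Γ^{A,B}(a_k)(X)‖₂² ≤ ‖a‖_∞² ‖X‖₂². -/

import Mathlib

open MeasureTheory

/-- let `Γ = Γ^{A,B}` be the double operator integral `w*`-continuous unital
`*`-representation of `L^∞(λ_A × λ_B)` on the Hilbert space `K = S²(H)` (formalized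
abstractly, on representatives, with `w*`-continuity expressed by `L¹`-representability of
the coefficient functionals). If `a ∈ L^∞(λ_A×λ_B; H₀)` for a separable Hilbert space `H₀`
with orthonormal basis `(ε_k)`, and `a_k = ⟨a, ε_k⟩`, then for every `X ∈ S²(H)`:
`Σ_k ‖Γ(a_k)(X)‖₂² ≤ ‖a‖_∞² ‖X‖₂²`. -/
theorem doi_coordinates_square_sum
    {ΩA ΩB : Type*} [MeasurableSpace ΩA] [MeasurableSpace ΩB]
    (μA : Measure ΩA) (μB : Measure ΩB) [SigmaFinite μA] [SigmaFinite μB]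
    {K : Type*} [NormedAddCommGroup K] [InnerProductSpace ℂ K] [CompleteSpace K]
    (Γ : (ΩA × ΩB → ℂ) → (K →L[ℂ] K))
    (hae : ∀ f g : ΩA × ΩB → ℂ, f =ᵐ[μA.prod μB] g → Γ f = Γ g)
    (hadd : ∀ f g : ΩA × ΩB → ℂ, Γ (f + g) = Γ f + Γ g)
    (hsmul : ∀ (c : ℂ) (f : ΩA × ΩB → ℂ), Γ (c • f) = c • Γ f)
    (hmul : ∀ f g : ΩA × ΩB → ℂ, Γ (f * g) = Γ f ∘L Γ g)
    (hone : Γ 1 = 1)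
    (hstar : ∀ f : ΩA × ΩB → ℂ,
      ContinuousLinearMap.adjoint (Γ f) = Γ (fun t => (starRingEnd ℂ) (f t)))
    (hcontr : ∀ (f : ΩA × ΩB → ℂ) (c : ℝ),
      (∀ᵐ t ∂μA.prod μB, ‖f t‖ ≤ c) → ‖Γ f‖ ≤ c)
    (hwstar : ∀ x y : K, ∃ h : ΩA × ΩB → ℂ, Integrable h (μA.prod μB) ∧
      ∀ f : ΩA × ΩB → ℂ, MemLp f ⊤ (μA.prod μB) →
        (inner ℂ y (Γ f x) : ℂ) = ∫ t, f t * h t ∂μA.prod μB)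
    {H₀ : Type*} [NormedAddCommGroup H₀] [InnerProductSpace ℂ H₀] [CompleteSpace H₀]
    [TopologicalSpace.SeparableSpace H₀]
    (ε : HilbertBasis ℕ ℂ H₀)
    (a : ΩA × ΩB → H₀) (ha : AEStronglyMeasurable a (μA.prod μB))
    (C : ℝ) (hC : 0 ≤ C) (haC : ∀ᵐ t ∂μA.prod μB, ‖a t‖ ≤ C) :
    ∀ X : K,
      ∑' k, ‖Γ (fun t => (inner ℂ (ε k) (a t) : ℂ)) X‖ ^ 2 ≤ C ^ 2 * ‖X‖ ^ 2 := by

  intro X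
  have hC2 : (0:ℝ) ≤ C ^ 2 * ‖X‖ ^ 2 := by positivity
  refine tsum_le_of_sum_le' hC2 ?_
  intro S
  set ak : ℕ → ΩA × ΩB → ℂ := fun k t => (inner ℂ (ε k) (a t) : ℂ) with hak
  have hΓ0 : Γ 0 = 0 := by
    have h := hsmul 0 0
    simpa using h
  have hΓsum : ∀ (T : Finset ℕ) (f : ℕ → ΩA × ΩB → ℂ),
      Γ (∑ k ∈ T, f k) = ∑ k ∈ T, Γ (f k) := by
    intro T f
    induction T using Finset.induction with
    | empty => simpa using hΓ0
    | insert _ _ h ih => rw [Finset.sum_insert h, hadd, ih, Finset.sum_insert h]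
  set g : ΩA × ΩB → ℂ := ∑ k ∈ S, (fun t => (starRingEnd ℂ) (ak k t) * ak k t) with hg
  have key : (∑ k ∈ S, (‖Γ (ak k) X‖ ^ 2 : ℂ)) = inner ℂ X (Γ g X) := by
    rw [hg, hΓsum, ContinuousLinearMap.sum_apply, inner_sum]
    refine Finset.sum_congr rfl fun k _ => ?_
    have h1 : (fun t => (starRingEnd ℂ) (ak k t) * ak k t)
        = (fun t => (starRingEnd ℂ) (ak k t)) * (ak k) := rfl
    rw [h1, hmul, ← hstar, ContinuousLinearMap.comp_apply,
      ContinuousLinearMap.adjoint_inner_right]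
    rw [inner_self_eq_norm_sq_to_K]
    norm_cast
  have hnorm : ‖Γ g‖ ≤ C ^ 2 := by
    apply hcontr
    filter_upwards [haC] with t ht
    have hgt : g t = ∑ k ∈ S, (starRingEnd ℂ) (ak k t) * ak k t := by
      rw [hg]; simp
    rw [hgt]
    calc ‖∑ k ∈ S, (starRingEnd ℂ) (ak k t) * ak k t‖
        ≤ ∑ k ∈ S, ‖(starRingEnd ℂ) (ak k t) * ak k t‖ := norm_sum_le _ _
      _ = ∑ k ∈ S, ‖ak k t‖ ^ 2 := by
          refine Finset.sum_congr rfl fun k _ => ?_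
          rw [norm_mul, RCLike.norm_conj, sq]
      _ ≤ ‖a t‖ ^ 2 := ε.orthonormal.sum_inner_products_le (a t)
      _ ≤ C ^ 2 := by nlinarith [norm_nonneg (a t)]
  have hre : (∑ k ∈ S, ‖Γ (ak k) X‖ ^ 2) = (inner ℂ X (Γ g X) : ℂ).re := by
    rw [← key, Complex.re_sum]
    simp [← Complex.ofReal_pow]
  rw [hre]
  calc (inner ℂ X (Γ g X) : ℂ).re ≤ ‖(inner ℂ X (Γ g X) : ℂ)‖ := Complex.re_le_norm _
    _ ≤ ‖X‖ * ‖Γ g X‖ := norm_inner_le_norm _ _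
    _ ≤ ‖X‖ * (‖Γ g‖ * ‖X‖) := by
        gcongr
        exact (Γ g).le_opNorm X
    _ ≤ ‖X‖ * (C ^ 2 * ‖X‖) := by
        gcongr
    _ = C ^ 2 * ‖X‖ ^ 2 := by ring
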